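/- Let J denote the 2×2 matrix [[0,1],[1,0]]. For any 2×2 complex matrices A2 and A3, the 4×4 block matrix [[A2, J],[0, A3]] has rank at most 2 if and only if A3·J·A2 = 0. -/

import Mathlib

open Matrix

private lemma jj : (!![0, 1; 1, 0] : Matrix (Fin 2) (Fin 2) ℂ) * !![0, 1; 1, 0] = 1 := by
  norm_num [Matrix.mul_fin_two, ← Matrix.one_fin_two]

private lemma rank_le_two :
    (Matrix.fromBlocks 0 (!![0, 1; 1, 0]) 0 0 :
      Matrix (Fin 2 ⊕ Fin 2) (Fin 2 ⊕ Fin 2) ℂ).rank ≤ 2 := by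
  have h : (Matrix.fromBlocks 0 (!![0, 1; 1, 0]) 0 0 : Matrix (Fin 2 ⊕ Fin 2) (Fin 2 ⊕ Fin 2) ℂ)
      = (Matrix.fromRows (!![0, 1; 1, 0]) 0 : Matrix (Fin 2 ⊕ Fin 2) (Fin 2) ℂ)
        * (Matrix.fromCols 0 1 : Matrix (Fin 2) (Fin 2 ⊕ Fin 2) ℂ) := by
    rw [Matrix.fromRows_mul_fromCols]
    simp
  rw [h]
  calc ((Matrix.fromRows (!![0, 1; 1, 0]) 0 : Matrix (Fin 2 ⊕ Fin 2) (Fin 2) ℂ)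
        * (Matrix.fromCols 0 1 : Matrix (Fin 2) (Fin 2 ⊕ Fin 2) ℂ)).rank
      ≤ (Matrix.fromRows (!![(0:ℂ), 1; 1, 0]) 0 : Matrix (Fin 2 ⊕ Fin 2) (Fin 2) ℂ).rank :=
        Matrix.rank_mul_le_left _ _
    _ ≤ Fintype.card (Fin 2) := Matrix.rank_le_card_width _
    _ = 2 := by simp

private lemma rank_ge_three (Y : Matrix (Fin 2) (Fin 2) ℂ) (hY : Y ≠ 0) :
    3 ≤ (Matrix.fromBlocks 0 (!![0, 1; 1, 0]) Y 0 :
      Matrix (Fin 2 ⊕ Fin 2) (Fin 2 ⊕ Fin 2) ℂ).rank := by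
  obtain ⟨i0, j0, hij⟩ : ∃ i j, Y i j ≠ 0 := by
    by_contra h
    push_neg at h
    exact hY (by ext i j; simp [h])
  set M : Matrix (Fin 2 ⊕ Fin 2) (Fin 2 ⊕ Fin 2) ℂ := Matrix.fromBlocks 0 (!![0, 1; 1, 0]) Y 0
    with hM
  set v : Fin 3 → (Fin 2 ⊕ Fin 2 → ℂ) := ![fun i => M i (Sum.inl j0),
    fun i => M i (Sum.inr 0), fun i => M i (Sum.inr 1)] with hv
  have hmem : ∀ k, v k ∈ LinearMap.range M.mulVecLin := by
    intro k
    fin_cases k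
    · exact ⟨Pi.single (Sum.inl j0) 1, by ext i; simp [hv, Matrix.mulVecLin_apply,
        Matrix.mulVec_single]⟩
    · exact ⟨Pi.single (Sum.inr 0) 1, by ext i; simp [hv, Matrix.mulVecLin_apply,
        Matrix.mulVec_single]⟩
    · exact ⟨Pi.single (Sum.inr 1) 1, by ext i; simp [hv, Matrix.mulVecLin_apply,
        Matrix.mulVec_single]⟩
  have hli : LinearIndependent ℂ v := by
    rw [Fintype.linearIndependent_iff]
    intro g hg
    have h0 := congrFun hg (Sum.inr i0)
    have h1 := congrFun hg (Sum.inl 0)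
    have h2 := congrFun hg (Sum.inl 1)
    simp [hv, hM, Fin.sum_univ_three, Matrix.fromBlocks, Matrix.vecHead, Matrix.vecTail]
      at h0 h1 h2
    have hg0 : g 0 = 0 := by
      rcases h0 with h | h
      · exact h
      · exact absurd h hij
    intro k
    fin_cases k <;> simp_all
  have hspan : Submodule.span ℂ (Set.range v) ≤ LinearMap.range M.mulVecLin := by
    rw [Submodule.span_le]
    rintro x ⟨k, rfl⟩
    exact hmem k
  calc (3 : ℕ) = Module.finrank ℂ (Submodule.span ℂ (Set.range v)) := by
        rw [finrank_span_eq_card hli]; simp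
    _ ≤ Module.finrank ℂ (LinearMap.range M.mulVecLin) := Submodule.finrank_mono hspan
    _ = M.rank := rfl

theorem stmt_0 (A2 A3 : Matrix (Fin 2) (Fin 2) ℂ) :
    (Matrix.fromBlocks A2 (!![0, 1; 1, 0]) 0 A3).rank ≤ 2 ↔
      A3 * !![0, 1; 1, 0] * A2 = 0 := by
  set J : Matrix (Fin 2) (Fin 2) ℂ := !![0, 1; 1, 0] with hJ
  set M : Matrix (Fin 2 ⊕ Fin 2) (Fin 2 ⊕ Fin 2) ℂ := Matrix.fromBlocks A2 J 0 A3
  set P : Matrix (Fin 2 ⊕ Fin 2) (Fin 2 ⊕ Fin 2) ℂ := Matrix.fromBlocks 1 0 (-(A3 * J)) 1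
  set Q : Matrix (Fin 2 ⊕ Fin 2) (Fin 2 ⊕ Fin 2) ℂ := Matrix.fromBlocks 1 0 (-(J * A2)) 1
  have hP : IsUnit P.det := by
    rw [Matrix.det_fromBlocks_zero₁₂]
    simp
  have hQ : IsUnit Q.det := by
    rw [Matrix.det_fromBlocks_zero₁₂]
    simp
  have hJJ : J * J = 1 := by rw [hJ]; exact jj
  have key : P * M * Q = Matrix.fromBlocks 0 J (-(A3 * J * A2)) 0 := by
    have h1 : P * M = Matrix.fromBlocks A2 J (-(A3 * J * A2)) 0 := by
      simp only [P, M, Matrix.fromBlocks_multiply, Matrix.one_mul, Matrix.mul_one,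
        Matrix.zero_mul, Matrix.mul_zero, add_zero, zero_add, Matrix.neg_mul]
      rw [Matrix.fromBlocks_inj]
      refine ⟨rfl, rfl, rfl, ?_⟩
      rw [mul_assoc A3 J J, hJJ, mul_one, neg_add_cancel]
    have h2 : Matrix.fromBlocks A2 J (-(A3 * J * A2)) 0 * Q
        = Matrix.fromBlocks 0 J (-(A3 * J * A2)) 0 := by
      simp only [Q, Matrix.fromBlocks_multiply, Matrix.one_mul, Matrix.mul_one,
        Matrix.zero_mul, Matrix.mul_zero, add_zero, zero_add, Matrix.mul_neg, neg_zero]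
      rw [Matrix.fromBlocks_inj]
      refine ⟨?_, rfl, rfl, rfl⟩
      rw [← mul_assoc J J A2, hJJ, one_mul, add_neg_cancel]
    rw [h1, h2]
  have hrank : (P * (M * Q)).rank = M.rank := by
    rw [Matrix.rank_mul_eq_right_of_isUnit_det _ _ hP,
      Matrix.rank_mul_eq_left_of_isUnit_det _ _ hQ]
  constructor
  · intro h
    by_contra hne
    have h3 := rank_ge_three (-(A3 * J * A2)) (by simpa using hne)
    rw [← key, mul_assoc, hrank] at h3
    omega
  · intro h
    have key' : P * M * Q = Matrix.fromBlocks 0 J 0 0 := by rw [key, h, neg_zero]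
    rw [← hrank, ← mul_assoc, key', hJ]
    exact rank_le_two
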